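/- Let 𝒜 be a sub-wheeled PROP of the mixed tensor algebra 𝒱 (note that then 𝒜^0_0 = K). Then 𝒜 is simple if and only if for all p, q ≥ 0 the trace pairing restricted to 𝒜^p_q × 𝒜^q_p is nondegenerate, i.e., for every nonzero u ∈ 𝒜^p_q there exists v ∈ 𝒜^q_p with ⟨u,v⟩ ≠ 0, and for every nonzero v ∈ 𝒜^q_p there exists u ∈ 𝒜^p_q with ⟨u,v⟩ ≠ 0. -/

import Mathlib

/-- The component `𝒱^p_q = (V*)^⊗p ⊗ V^⊗q` of the mixed tensor algebra on an
`d`-dimensional vector space `V`, realized concretely in coordinates: a tensor is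
the array of its coefficients `A^{x_1,…,x_p}_{y_1,…,y_q}`. -/
abbrev MixT (K : Type) (d p q : ℕ) : Type := (Fin p → Fin d) → (Fin q → Fin d) → K

/-- The unit `1 ∈ 𝒱^0_0 = K`. -/
def munit (K : Type) [One K] (d : ℕ) : MixT K d 0 0 := fun _ _ => 1

/-- The identity tensor `id ∈ 𝒱^1_1 ≅ End(V)`. -/
def mid (K : Type) [One K] [Zero K] (d : ℕ) : MixT K d 1 1 :=
  fun x y => if x 0 = y 0 then 1 else 0

/-- The tensor product `⊗ : 𝒱^{p₁}_{q₁} × 𝒱^{p₂}_{q₂} → 𝒱^{p₁+p₂}_{q₁+q₂}`,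
juxtaposing the `V*`-factors and the `V`-factors. -/
def mtens {K : Type} [Mul K] {d p₁ q₁ p₂ q₂ : ℕ}
    (A : MixT K d p₁ q₁) (B : MixT K d p₂ q₂) : MixT K d (p₁ + p₂) (q₁ + q₂) :=
  fun x y =>
    A (fun a => x (Fin.castAdd p₂ a)) (fun b => y (Fin.castAdd q₂ b)) *
    B (fun a => x (Fin.natAdd p₁ a)) (fun b => y (Fin.natAdd q₁ b))

/-- The contraction `∂^i_j : 𝒱^{p+1}_{q+1} → 𝒱^p_q`, evaluating the `i`-th
`V*`-factor on the `j`-th `V`-factor. -/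
def mcontr {K : Type} [AddCommMonoid K] {d p q : ℕ} (i : Fin (p + 1)) (j : Fin (q + 1))
    (A : MixT K d (p + 1) (q + 1)) : MixT K d p q :=
  fun x y => ∑ k : Fin d, A (i.insertNth k x) (j.insertNth k y)

/-- The trace pairing `⟨·,·⟩ : 𝒱^p_q × 𝒱^q_p → K`: the full contraction,
i.e. the trace of the composition `B ∘ A : V^⊗p → V^⊗p`. -/
def mpair {K : Type} [CommRing K] {d p q : ℕ} (A : MixT K d p q) (B : MixT K d q p) : K :=
  ∑ x : Fin p → Fin d, ∑ y : Fin q → Fin d, A x y * B y x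

set_option linter.unusedSectionVars false
namespace Stmt13Aux

variable {K : Type} [Field K] {d : ℕ}

def mcast {p q p' q' : ℕ} (h₁ : p = p') (h₂ : q = q') (A : MixT K d p q) : MixT K d p' q' :=
  fun x y => A (fun a => x (Fin.cast h₁ a)) (fun b => y (Fin.cast h₂ b))

@[simp] lemma mcast_rfl {p q : ℕ} (A : MixT K d p q) : mcast rfl rfl A = A := rfl

/-- partial contraction of the last `m` slots against each other -/
def pc {P Q : ℕ} (m : ℕ) (W : MixT K d (P + m) (Q + m)) : MixT K d P Q :=
  fun X Y => ∑ t : Fin m → Fin d, W (Fin.append X t) (Fin.append Y t)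

section Closed

variable (S : ∀ p q : ℕ, Set (MixT K d p q))
variable (hT : ∀ (p q : ℕ) (A : MixT K d p q), A ∈ S p q → mtens A (mid K d) ∈ S (p+1) (q+1))
variable (hC : ∀ (p q : ℕ) (i : Fin (p+1)) (j : Fin (q+1)) (A : MixT K d (p+1) (q+1)),
    A ∈ S (p+1) (q+1) → mcontr i j A ∈ S p q)

lemma mcast_mem {p q p' q' : ℕ} (h₁ : p = p') (h₂ : q = q') {A : MixT K d p q}
    (hA : A ∈ S p q) : mcast h₁ h₂ A ∈ S p' q' := by
  subst h₁; subst h₂; simpa using hA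

lemma pc_succ {P Q m : ℕ} (W : MixT K d (P + (m+1)) (Q + (m+1))) :
    pc (m+1) W = pc m (mcontr (Fin.last (P+m)) (Fin.last (Q+m)) W) := by
  funext X Y
  show (∑ t : Fin (m+1) → Fin d, W (Fin.append X t) (Fin.append Y t))
      = ∑ t : Fin m → Fin d, ∑ k : Fin d,
        W ((Fin.last (P+m)).insertNth k (Fin.append X t))
          ((Fin.last (Q+m)).insertNth k (Fin.append Y t))
  rw [← Equiv.sum_comp (Fin.snocEquiv (fun _ : Fin (m+1) => Fin d))
      (fun t => W (Fin.append X t) (Fin.append Y t))]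
  rw [Fintype.sum_prod_type]
  rw [Finset.sum_comm]
  refine Finset.sum_congr rfl fun t _ => Finset.sum_congr rfl fun k _ => ?_
  simp [Fin.snocEquiv, Fin.insertNth_last', Fin.append_snoc]

lemma pc_zero {P Q : ℕ} (W : MixT K d (P+0) (Q+0)) : pc 0 W = W := by
  have hap : ∀ {R : ℕ} (X : Fin R → Fin d) (t : Fin 0 → Fin d), Fin.append X t = X := by
    intro R X t; funext i; exact Fin.append_left X t ⟨i.1, i.2⟩
  funext X Y
  show (∑ t : Fin 0 → Fin d, W (Fin.append X t) (Fin.append Y t)) = W X Y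
  rw [Fintype.sum_unique]
  rw [hap, hap]

include hC in
lemma pc_mem {P Q : ℕ} : ∀ (m : ℕ) (W : MixT K d (P+m) (Q+m)),
    W ∈ S (P+m) (Q+m) → pc m W ∈ S P Q := by
  intro m
  induction m with
  | zero => intro W hW; rw [pc_zero]; exact hW
  | succ m ih =>
    intro W hW
    rw [pc_succ]
    exact ih _ (hC _ _ _ _ _ hW)

end Closed

/-- the cycle moving slot `j` to the end -/
def mu {n : ℕ} (j : Fin (n+1)) : Equiv.Perm (Fin (n+1)) :=
  (finSuccEquiv' j).trans (finSuccEquiv' (Fin.last n)).symm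

@[simp] lemma mu_self {n : ℕ} (j : Fin (n+1)) : mu j j = Fin.last n := by
  simp [mu, finSuccEquiv'_at, finSuccEquiv'_symm_none]

@[simp] lemma mu_succAbove {n : ℕ} (j : Fin (n+1)) (r : Fin n) :
    mu j (j.succAbove r) = r.castSucc := by
  simp [mu, finSuccEquiv'_succAbove, finSuccEquiv'_symm_some, Fin.succAbove_last]

section MoveLemmas

lemma natAdd_zero_eq_last (p : ℕ) : Fin.natAdd p (0 : Fin 1) = Fin.last p := by
  ext; simp

lemma mVmove_eq {p n : ℕ} (j : Fin (n+1)) (A : MixT K d p (n+1)) :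
    mcontr (Fin.last p) j.castSucc (mtens A (mid K d)) =
      fun x y => A x (fun b => y (mu j b)) := by
  funext x y
  simp only [mcontr, mtens, mid]
  have hx : ∀ k : Fin d, (fun a => ((Fin.last p).insertNth k x : Fin (p+1) → Fin d) (Fin.castAdd 1 a)) = x := by
    intro k; funext a
    have h1 : (Fin.castAdd 1 a : Fin (p+1)) = (Fin.last p).succAbove a := by
      rw [Fin.succAbove_last]; rfl
    rw [h1, Fin.insertNth_apply_succAbove]
  have h2 : ∀ k : Fin d, ((Fin.last p).insertNth k x : Fin (p+1) → Fin d) (Fin.natAdd p (0 : Fin 1)) = k := by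
    intro k; rw [natAdd_zero_eq_last, Fin.insertNth_apply_same]
  have h3 : ∀ k : Fin d,
      ((j.castSucc).insertNth k y : Fin (n+2) → Fin d) (Fin.natAdd (n+1) (0 : Fin 1)) = y (Fin.last n) := by
    intro k
    rw [natAdd_zero_eq_last]
    have h4 : (Fin.last (n+1)) = (j.castSucc).succAbove (Fin.last n) := by
      rw [Fin.succAbove_of_le_castSucc _ _ (Fin.castSucc_le_castSucc_iff.mpr (Fin.le_last j)),
        Fin.succ_last]
    rw [h4, Fin.insertNth_apply_succAbove]
  have step1 : ∀ k : Fin d,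
      A (fun a => ((Fin.last p).insertNth k x : Fin (p+1) → Fin d) (Fin.castAdd 1 a))
          (fun b => ((j.castSucc).insertNth k y : Fin (n+2) → Fin d) (Fin.castAdd 1 b)) *
        (if ((Fin.last p).insertNth k x : Fin (p+1) → Fin d) (Fin.natAdd p 0)
            = ((j.castSucc).insertNth k y : Fin (n+2) → Fin d) (Fin.natAdd (n+1) 0) then (1:K) else 0)
      = if k = y (Fin.last n) then
          A x (fun b => ((j.castSucc).insertNth k y : Fin (n+2) → Fin d) (Fin.castAdd 1 b)) else 0 := by
    intro k
    rw [hx, h2, h3, mul_ite, mul_one, mul_zero]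
  rw [Finset.sum_congr rfl (fun k _ => step1 k)]
  rw [Finset.sum_ite_eq' Finset.univ (y (Fin.last n))]
  simp only [Finset.mem_univ, if_true]
  congr 1
  funext b
  rcases eq_or_ne b j with rfl | hbj
  · show ((b.castSucc).insertNth (y (Fin.last n)) y : Fin (n+2) → Fin d) (Fin.castSucc b) = _
    rw [Fin.insertNth_apply_same, mu_self]
  · obtain ⟨r, rfl⟩ := Fin.exists_succAbove_eq hbj
    show ((j.castSucc).insertNth (y (Fin.last n)) y : Fin (n+2) → Fin d) (Fin.castSucc (j.succAbove r)) = _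
    rw [← Fin.castSucc_succAbove_castSucc, Fin.insertNth_apply_succAbove, mu_succAbove]

lemma mSmove_eq {n q : ℕ} (i : Fin (n+1)) (A : MixT K d (n+1) q) :
    mcontr i.castSucc (Fin.last q) (mtens A (mid K d)) =
      fun x y => A (fun a => x (mu i a)) y := by
  funext x y
  simp only [mcontr, mtens, mid]
  have hy : ∀ k : Fin d,
      (fun b => ((Fin.last q).insertNth k y : Fin (q+1) → Fin d) (Fin.castAdd 1 b)) = y := by
    intro k; funext b
    have h1 : (Fin.castAdd 1 b : Fin (q+1)) = (Fin.last q).succAbove b := by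
      rw [Fin.succAbove_last]; rfl
    rw [h1, Fin.insertNth_apply_succAbove]
  have h2 : ∀ k : Fin d,
      ((Fin.last q).insertNth k y : Fin (q+1) → Fin d) (Fin.natAdd q (0 : Fin 1)) = k := by
    intro k; rw [natAdd_zero_eq_last, Fin.insertNth_apply_same]
  have h3 : ∀ k : Fin d,
      ((i.castSucc).insertNth k x : Fin (n+2) → Fin d) (Fin.natAdd (n+1) (0 : Fin 1))
        = x (Fin.last n) := by
    intro k
    rw [natAdd_zero_eq_last]
    have h4 : (Fin.last (n+1)) = (i.castSucc).succAbove (Fin.last n) := by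
      rw [Fin.succAbove_of_le_castSucc _ _ (Fin.castSucc_le_castSucc_iff.mpr (Fin.le_last i)),
        Fin.succ_last]
    rw [h4, Fin.insertNth_apply_succAbove]
  have step1 : ∀ k : Fin d,
      A (fun a => ((i.castSucc).insertNth k x : Fin (n+2) → Fin d) (Fin.castAdd 1 a))
          (fun b => ((Fin.last q).insertNth k y : Fin (q+1) → Fin d) (Fin.castAdd 1 b)) *
        (if ((i.castSucc).insertNth k x : Fin (n+2) → Fin d) (Fin.natAdd (n+1) 0)
            = ((Fin.last q).insertNth k y : Fin (q+1) → Fin d) (Fin.natAdd q 0) then (1:K) else 0)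
      = if x (Fin.last n) = k then
          A (fun a => ((i.castSucc).insertNth k x : Fin (n+2) → Fin d) (Fin.castAdd 1 a)) y
        else 0 := by
    intro k
    rw [hy, h2, h3, mul_ite, mul_one, mul_zero]
  rw [Finset.sum_congr rfl (fun k _ => step1 k)]
  rw [Finset.sum_ite_eq Finset.univ (x (Fin.last n))]
  simp only [Finset.mem_univ, if_true]
  congr 1
  funext a
  rcases eq_or_ne a i with rfl | hai
  · show ((a.castSucc).insertNth (x (Fin.last n)) x : Fin (n+2) → Fin d) (Fin.castSucc a) = _
    rw [Fin.insertNth_apply_same, mu_self]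
  · obtain ⟨r, rfl⟩ := Fin.exists_succAbove_eq hai
    show ((i.castSucc).insertNth (x (Fin.last n)) x : Fin (n+2) → Fin d)
        (Fin.castSucc (i.succAbove r)) = _
    rw [← Fin.castSucc_succAbove_castSucc, Fin.insertNth_apply_succAbove, mu_succAbove]

end MoveLemmas

section PermGen
open Equiv

lemma mu_apply_lt {n : ℕ} (j b : Fin (n+1)) (h : b.val < j.val) : mu j b = b := by
  have hb : b.val < n := by have := j.isLt; omega
  have h1 : j.succAbove ⟨b.val, hb⟩ = b := by
    rw [Fin.succAbove_of_castSucc_lt]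
    · ext; simp
    · rw [Fin.lt_def]; simpa using h
  conv_lhs => rw [← h1, mu_succAbove]
  ext; simp

lemma mu_apply_gt {n : ℕ} (j b : Fin (n+1)) (h : j.val < b.val) : (mu j b).val = b.val - 1 := by
  have hb : b.val - 1 < n := by have := b.isLt; omega
  have h1 : j.succAbove ⟨b.val - 1, hb⟩ = b := by
    rw [Fin.succAbove_of_le_castSucc]
    · ext; simp; omega
    · rw [Fin.le_def]; simp; omega
  conv_lhs => rw [← h1, mu_succAbove]
  simp

lemma mu_adj {n : ℕ} (t : Fin n) :
    mu (t.castSucc) = mu (t.succ) * Equiv.swap t.castSucc t.succ := by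
  have hlt : t.castSucc < t.succ := Fin.castSucc_lt_succ
  have h2 : (t.succ).succAbove t = t.castSucc := Fin.succAbove_of_castSucc_lt _ _ hlt
  have h3 : (t.castSucc).succAbove t = t.succ := Fin.succAbove_of_le_castSucc _ _ le_rfl
  ext b
  rcases eq_or_ne b t.castSucc with rfl | h1
  · rw [Perm.mul_apply, swap_apply_left, mu_self, mu_self]
  · rcases eq_or_ne b t.succ with rfl | h4
    · rw [Perm.mul_apply, swap_apply_right]
      conv_lhs => rw [← h3, mu_succAbove]
      conv_rhs => rw [← h2, mu_succAbove]
    · rw [Perm.mul_apply, swap_apply_of_ne_of_ne h1 h4]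
      have hv1 : b.val ≠ t.val := fun hc => h1 (by ext; simpa using hc)
      have hv2 : b.val ≠ t.val + 1 := fun hc => h4 (by ext; simpa using hc)
      rcases Nat.lt_or_ge b.val t.val with hlt2 | hge
      · rw [mu_apply_lt _ _ (show b.val < (t.castSucc).val by simp; omega),
          mu_apply_lt _ _ (show b.val < (t.succ).val by simp; omega)]
      · have hgt : (t.succ).val < b.val := by simp; omega
        rw [mu_apply_gt _ _ (show (t.castSucc).val < b.val by simp; omega),
          mu_apply_gt _ _ hgt]

lemma inv_mem_submonoid {α : Type*} [Fintype α] [DecidableEq α] (G : Submonoid (Perm α))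
    {g : Perm α} (hg : g ∈ G) : g⁻¹ ∈ G := by
  have hk : 0 < orderOf g := orderOf_pos g
  have h1 : g⁻¹ = g ^ (orderOf g - 1) := by
    apply inv_eq_of_mul_eq_one_right
    rw [← pow_succ']
    rw [Nat.sub_add_cancel hk]
    exact pow_orderOf_eq_one g
  rw [h1]; exact pow_mem hg _

lemma perm_mem_of_mu {n : ℕ} (G : Submonoid (Perm (Fin (n+1)))) (hmu : ∀ j, mu j ∈ G) :
    ∀ τ, τ ∈ G := by
  have hadj : ∀ t : Fin n, swap t.castSucc t.succ ∈ G := by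
    intro t
    have h1 : Equiv.swap t.castSucc t.succ = (mu (t.succ))⁻¹ * mu (t.castSucc) := by
      rw [mu_adj, ← mul_assoc, inv_mul_cancel, one_mul]
    rw [h1]; exact G.mul_mem (inv_mem_submonoid G (hmu _)) (hmu _)
  have hswap : ∀ (m : ℕ) (a b : Fin (n+1)), b.val = a.val + m → swap a b ∈ G := by
    intro m
    induction m using Nat.strong_induction_on with
    | _ m ih =>
      intro a b hab
      match m, hab with
      | 0, hab =>
        have : a = b := by ext; omega
        subst this
        rw [swap_self]
        exact G.one_mem
      | 1, hab =>
        have ha : a.val < n := by have := b.isLt; omega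
        have h1 : (⟨a.val, ha⟩ : Fin n).castSucc = a := by ext; simp
        have h2 : (⟨a.val, ha⟩ : Fin n).succ = b := by ext; simp; omega
        rw [← h1, ← h2]
        exact hadj _
      | (m'+2), hab =>
        have hc : a.val + 1 < n + 1 := by have := b.isLt; omega
        set c : Fin (n+1) := ⟨a.val + 1, hc⟩ with hcdef
        have h1 : swap a c ∈ G := ih 1 (by omega) a c rfl
        have h2 : swap c b ∈ G := ih (m'+1) (by omega) c b (by simp [hcdef]; omega)
        have hxy : a ≠ c := by intro h; apply Fin.val_eq_val a c |>.mpr at h; simp [hcdef] at h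
        have hxz : a ≠ b := by intro h; rw [h] at hab; omega
        have h3 : swap c b * swap a c * swap c b = swap b a := swap_mul_swap_mul_swap hxy hxz
        rw [swap_comm, ← h3]
        exact G.mul_mem (G.mul_mem h2 h1) h2
  have hallswap : ∀ a b : Fin (n+1), swap a b ∈ G := by
    intro a b
    rcases le_total a.val b.val with h | h
    · exact hswap (b.val - a.val) a b (by omega)
    · rw [swap_comm]
      exact hswap (a.val - b.val) b a (by omega)
  intro τ
  have htop : τ ∈ Submonoid.closure {σ : Perm (Fin (n+1)) | σ.IsSwap} := by
    rw [Equiv.Perm.mclosure_isSwap]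
    exact Submonoid.mem_top τ
  refine Submonoid.closure_le.mpr ?_ htop
  rintro σ ⟨x, y, hxy, rfl⟩
  exact hallswap x y

end PermGen
section Closed2
open Equiv

variable (S : ∀ p q : ℕ, Set (MixT K d p q))
variable (hT : ∀ (p q : ℕ) (A : MixT K d p q), A ∈ S p q → mtens A (mid K d) ∈ S (p+1) (q+1))
variable (hC : ∀ (p q : ℕ) (i : Fin (p+1)) (j : Fin (q+1)) (A : MixT K d (p+1) (q+1)),
    A ∈ S (p+1) (q+1) → mcontr i j A ∈ S p q)

include hT hC in
lemma reindexV_mem {p q : ℕ} (τ : Perm (Fin q)) {A : MixT K d p q} (hA : A ∈ S p q) :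
    (fun x y => A x (fun b => y (τ b))) ∈ S p q := by
  cases q with
  | zero =>
    have he : (fun (x : Fin p → Fin d) (y : Fin 0 → Fin d) => A x (fun b => y (τ b))) = A := by
      funext x y; congr 1; funext b; exact b.elim0
    rwa [he]
  | succ n =>
    let G : Submonoid (Perm (Fin (n+1))) :=
      { carrier := {σ | ∀ (P : ℕ) (B : MixT K d P (n+1)), B ∈ S P (n+1) →
          (fun x y => B x (fun b => y (σ b))) ∈ S P (n+1)}
        one_mem' := by
          intro P B hB
          exact hB
        mul_mem' := by
          intro σ₁ σ₂ h₁ h₂ P B hB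
          exact h₁ P _ (h₂ P B hB) }
    have hmu : ∀ j, mu j ∈ G := by
      intro j
      show ∀ (P : ℕ) (B : MixT K d P (n+1)), B ∈ S P (n+1) →
        (fun x y => B x (fun b => y (mu j b))) ∈ S P (n+1)
      intro P B hB
      rw [← mVmove_eq]
      exact hC _ _ _ _ _ (hT _ _ _ hB)
    exact perm_mem_of_mu G hmu τ p A hA

include hT hC in
lemma reindexS_mem {p q : ℕ} (σ : Perm (Fin p)) {A : MixT K d p q} (hA : A ∈ S p q) :
    (fun x y => A (fun a => x (σ a)) y) ∈ S p q := by
  cases p with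
  | zero =>
    have he : (fun (x : Fin 0 → Fin d) (y : Fin q → Fin d) => A (fun a => x (σ a)) y) = A := by
      funext x y; congr 1; funext a; exact a.elim0
    rwa [he]
  | succ n =>
    let G : Submonoid (Perm (Fin (n+1))) :=
      { carrier := {e | ∀ (Q : ℕ) (B : MixT K d (n+1) Q), B ∈ S (n+1) Q →
          (fun x y => B (fun a => x (e a)) y) ∈ S (n+1) Q}
        one_mem' := by
          intro Q B hB
          exact hB
        mul_mem' := by
          intro e₁ e₂ h₁ h₂ Q B hB
          exact h₁ Q _ (h₂ Q B hB) }
    have hmu : ∀ j, mu j ∈ G := by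
      intro j
      show ∀ (Q : ℕ) (B : MixT K d (n+1) Q), B ∈ S (n+1) Q →
        (fun x y => B (fun a => x (mu j a)) y) ∈ S (n+1) Q
      intro Q B hB
      rw [← mSmove_eq]
      exact hC _ _ _ _ _ (hT _ _ _ hB)
    exact perm_mem_of_mu G hmu σ q A hA

include hT hC in
lemma reindexE_mem {p q p' q' : ℕ} (e : Fin p' ≃ Fin p) (f : Fin q' ≃ Fin q)
    {A : MixT K d p' q'} (hA : A ∈ S p' q') :
    (fun (x : Fin p → Fin d) (y : Fin q → Fin d) =>
      A (fun a => x (e a)) (fun b => y (f b))) ∈ S p q := by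
  have hp : p' = p := by simpa using Fintype.card_congr e
  have hq : q' = q := by simpa using Fintype.card_congr f
  subst hp; subst hq
  exact reindexS_mem S hT hC e (reindexV_mem S hT hC f hA)

end Closed2
section Sums

lemma appEquiv_eq {m n : ℕ} (a : Fin m → Fin d) (b : Fin n → Fin d) :
    (Equiv.arrowCongr finSumFinEquiv (Equiv.refl (Fin d)))
      ((Equiv.sumArrowEquivProdArrow (Fin m) (Fin n) (Fin d)).symm (a, b))
      = Fin.append a b := by
  funext i
  refine Fin.addCases (fun x => ?_) (fun x => ?_) i
  · rw [Fin.append_left]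
    simp [Equiv.sumArrowEquivProdArrow]
  · rw [Fin.append_right]
    simp [Equiv.sumArrowEquivProdArrow]

lemma sum_append {M : Type*} [AddCommMonoid M] {m n : ℕ} (F : (Fin (m+n) → Fin d) → M) :
    ∑ x : Fin (m+n) → Fin d, F x
      = ∑ a : Fin m → Fin d, ∑ b : Fin n → Fin d, F (Fin.append a b) := by
  rw [← Equiv.sum_comp ((Equiv.sumArrowEquivProdArrow (Fin m) (Fin n) (Fin d)).symm.trans
      (Equiv.arrowCongr finSumFinEquiv (Equiv.refl (Fin d)))) F, Fintype.sum_prod_type]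
  refine Finset.sum_congr rfl fun a _ => Finset.sum_congr rfl fun b _ => ?_
  rw [Equiv.trans_apply]
  rw [appEquiv_eq]

end Sums

section Shuffle

def fin3 {n₁ n₂ n₃ : ℕ} : (Fin n₁ ⊕ (Fin n₂ ⊕ Fin n₃)) ≃ Fin (n₁+(n₂+n₃)) :=
  (Equiv.sumCongr (Equiv.refl (Fin n₁)) finSumFinEquiv).trans finSumFinEquiv

def shuf {m₁ m₂ m₃ n₁ n₂ n₃ : ℕ}
    (g : (Fin m₁ ⊕ (Fin m₂ ⊕ Fin m₃)) ≃ (Fin n₁ ⊕ (Fin n₂ ⊕ Fin n₃))) :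
    Fin (m₁+(m₂+m₃)) ≃ Fin (n₁+(n₂+n₃)) := (fin3.symm.trans g).trans fin3

lemma shuf_apply {m₁ m₂ m₃ n₁ n₂ n₃ : ℕ}
    (g : (Fin m₁ ⊕ (Fin m₂ ⊕ Fin m₃)) ≃ (Fin n₁ ⊕ (Fin n₂ ⊕ Fin n₃)))
    (z : Fin m₁ ⊕ (Fin m₂ ⊕ Fin m₃)) : shuf g (fin3 z) = fin3 (g z) := by
  simp [shuf]

lemma fin3_inl {n₁ n₂ n₃ : ℕ} (a : Fin n₁) :
    (fin3 (Sum.inl a) : Fin (n₁+(n₂+n₃))) = Fin.castAdd (n₂+n₃) a := by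
  simp [fin3]

lemma fin3_inr_inl {n₁ n₂ n₃ : ℕ} (b : Fin n₂) :
    (fin3 (Sum.inr (Sum.inl b)) : Fin (n₁+(n₂+n₃))) = Fin.natAdd n₁ (Fin.castAdd n₃ b) := by
  simp [fin3]

lemma fin3_inr_inr {n₁ n₂ n₃ : ℕ} (c : Fin n₃) :
    (fin3 (Sum.inr (Sum.inr c)) : Fin (n₁+(n₂+n₃))) = Fin.natAdd n₁ (Fin.natAdd n₂ c) := by
  simp [fin3]

lemma app3_inl {α : Type*} {n₁ n₂ n₃ : ℕ} (u : Fin n₁ → α) (v : Fin n₂ → α) (w : Fin n₃ → α)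
    (a : Fin n₁) : Fin.append u (Fin.append v w) (fin3 (Sum.inl a)) = u a := by
  rw [fin3_inl, Fin.append_left]

lemma app3_inr_inl {α : Type*} {n₁ n₂ n₃ : ℕ} (u : Fin n₁ → α) (v : Fin n₂ → α) (w : Fin n₃ → α)
    (b : Fin n₂) : Fin.append u (Fin.append v w) (fin3 (Sum.inr (Sum.inl b))) = v b := by
  rw [fin3_inr_inl, Fin.append_right, Fin.append_left]

lemma app3_inr_inr {α : Type*} {n₁ n₂ n₃ : ℕ} (u : Fin n₁ → α) (v : Fin n₂ → α) (w : Fin n₃ → α)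
    (c : Fin n₃) : Fin.append u (Fin.append v w) (fin3 (Sum.inr (Sum.inr c))) = w c := by
  rw [fin3_inr_inr, Fin.append_right, Fin.append_right]

end Shuffle

section MpairBasic

lemma mpair_comm {p q : ℕ} (A : MixT K d p q) (B : MixT K d q p) :
    mpair A B = mpair B A := by
  rw [mpair, mpair, Finset.sum_comm]
  exact Finset.sum_congr rfl fun y _ => Finset.sum_congr rfl fun x _ => mul_comm _ _

lemma mpair_zero_left {p q : ℕ} (B : MixT K d q p) : mpair (0 : MixT K d p q) B = 0 := by
  simp [mpair]

lemma mpair_add_left {p q : ℕ} (A A' : MixT K d p q) (B : MixT K d q p) :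
    mpair (A + A') B = mpair A B + mpair A' B := by
  simp [mpair, add_mul, Finset.sum_add_distrib]

lemma mpair_smul_left {p q : ℕ} (c : K) (A : MixT K d p q) (B : MixT K d q p) :
    mpair (c • A) B = c * mpair A B := by
  simp [mpair, Finset.mul_sum, mul_assoc]

lemma mpair_munit : mpair (munit K d) (munit K d) = 1 := by
  rw [mpair, Fintype.sum_unique, Fintype.sum_unique, munit, mul_one]

lemma munit_ne_zero : munit K d ≠ 0 := by
  intro h
  have := congrFun (congrFun h default) default
  simp [munit] at this

end MpairBasic
section InsT
open Equiv

def insPerm {n : ℕ} (j : Fin (n+1)) : Equiv.Perm (Fin (n+1)) :=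
  (finSuccEquiv' (Fin.last n)).trans (finSuccEquiv' j).symm

lemma insPerm_castAdd {n : ℕ} (j : Fin (n+1)) (b : Fin n) :
    insPerm j (Fin.castAdd 1 b) = j.succAbove b := by
  have h : (Fin.castAdd 1 b : Fin (n+1)) = (Fin.last n).succAbove b := by
    rw [Fin.succAbove_last]; rfl
  rw [h, insPerm, Equiv.trans_apply, finSuccEquiv'_succAbove, finSuccEquiv'_symm_some]

lemma insPerm_last {n : ℕ} (j : Fin (n+1)) :
    insPerm j (Fin.natAdd n (0 : Fin 1)) = j := by
  rw [natAdd_zero_eq_last, insPerm, Equiv.trans_apply, finSuccEquiv'_at, finSuccEquiv'_symm_none]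

/-- inserting an identity-linked pair of slots at positions `j` (V*) and `i` (V) -/
def insT {q p : ℕ} (j : Fin (q+1)) (i : Fin (p+1)) (B : MixT K d q p) : MixT K d (q+1) (p+1) :=
  fun Y X => B (fun b => Y (j.succAbove b)) (fun a => X (i.succAbove a)) *
    (if Y j = X i then 1 else 0)

lemma insT_mem (S : ∀ p q : ℕ, Set (MixT K d p q))
    (hT : ∀ (p q : ℕ) (A : MixT K d p q), A ∈ S p q → mtens A (mid K d) ∈ S (p+1) (q+1))
    (hC : ∀ (p q : ℕ) (i : Fin (p+1)) (j : Fin (q+1)) (A : MixT K d (p+1) (q+1)),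
      A ∈ S (p+1) (q+1) → mcontr i j A ∈ S p q)
    {q p : ℕ} (j : Fin (q+1)) (i : Fin (p+1)) {B : MixT K d q p} (hB : B ∈ S q p) :
    insT j i B ∈ S (q+1) (p+1) := by
  have h := reindexE_mem S hT hC (insPerm j) (insPerm i) (hT _ _ _ hB)
  have he : insT j i B = (fun Y X => (mtens B (mid K d))
      (fun b => Y (insPerm j b)) (fun a => X (insPerm i a))) := by
    funext Y X
    show B _ _ * _ = B _ _ * mid K d _ _
    congr 1
    · congr 1
      · funext b
        show Y (j.succAbove b) = Y (insPerm j (Fin.castAdd 1 b))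
        rw [insPerm_castAdd]
      · funext a
        show X (i.succAbove a) = X (insPerm i (Fin.castAdd 1 a))
        rw [insPerm_castAdd]
    · show _ = if Y (insPerm j (Fin.natAdd q (0 : Fin 1)))
          = X (insPerm i (Fin.natAdd p (0 : Fin 1))) then (1:K) else 0
      rw [insPerm_last, insPerm_last]
  rw [he]
  exact h

lemma mpair_contr {p q : ℕ} (i : Fin (p+1)) (j : Fin (q+1)) (u : MixT K d (p+1) (q+1))
    (B : MixT K d q p) : mpair (mcontr i j u) B = mpair u (insT j i B) := by
  have hR : mpair u (insT j i B)
      = ∑ k : Fin d, ∑ x : Fin p → Fin d, ∑ y : Fin q → Fin d,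
          u (i.insertNth k x) (j.insertNth k y) * B y x := by
    rw [mpair]
    rw [← Equiv.sum_comp (Fin.insertNthEquiv (fun _ => Fin d) i)
        (fun X => ∑ Y : Fin (q+1) → Fin d, u X Y * insT j i B Y X), Fintype.sum_prod_type]
    refine Finset.sum_congr rfl fun k _ => Finset.sum_congr rfl fun x _ => ?_
    have hfix : (Fin.insertNthEquiv (fun _ => Fin d) i) (k, x) = i.insertNth k x := by
      funext z; simp
    rw [hfix]
    rw [← Equiv.sum_comp (Fin.insertNthEquiv (fun _ => Fin d) j)
        (fun Y => u (i.insertNth k x) Y * insT j i B Y (i.insertNth k x)), Fintype.sum_prod_type]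
    rw [Finset.sum_comm]
    refine Finset.sum_congr rfl fun y _ => ?_
    have hfix2 : ∀ k' : Fin d, (Fin.insertNthEquiv (fun _ => Fin d) j) (k', y) = j.insertNth k' y := by
      intro k'; funext z; simp
    rw [Finset.sum_congr rfl (fun k' _ => by rw [hfix2 k'])]
    calc (∑ k' : Fin d, u (i.insertNth k x) (j.insertNth k' y)
            * insT j i B (j.insertNth k' y) (i.insertNth k x))
        = ∑ k' : Fin d, if k' = k then
            u (i.insertNth k x) (j.insertNth k' y) * B y x else 0 := by
          refine Finset.sum_congr rfl fun k' _ => ?_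
          rw [insT]
          have h1 : (fun b => (j.insertNth k' y : Fin (q+1) → Fin d) (j.succAbove b)) = y := by
            funext b; rw [Fin.insertNth_apply_succAbove]
          have h2 : (fun a => (i.insertNth k x : Fin (p+1) → Fin d) (i.succAbove a)) = x := by
            funext a; rw [Fin.insertNth_apply_succAbove]
          rw [h1, h2, Fin.insertNth_apply_same, Fin.insertNth_apply_same]
          rw [mul_ite, mul_one, mul_zero, mul_ite, mul_zero]
      _ = u (i.insertNth k x) (j.insertNth k y) * B y x := by
          rw [Finset.sum_ite_eq' Finset.univ k (fun k' =>
            u (i.insertNth k x) (j.insertNth k' y) * B y x)]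
          rw [if_pos (Finset.mem_univ k)]
  have hL : mpair (mcontr i j u) B
      = ∑ k : Fin d, ∑ x : Fin p → Fin d, ∑ y : Fin q → Fin d,
          u (i.insertNth k x) (j.insertNth k y) * B y x := by
    rw [mpair]
    simp only [mcontr]
    calc (∑ x : Fin p → Fin d, ∑ y : Fin q → Fin d,
            (∑ k : Fin d, u (i.insertNth k x) (j.insertNth k y)) * B y x)
        = ∑ x : Fin p → Fin d, ∑ y : Fin q → Fin d, ∑ k : Fin d,
            u (i.insertNth k x) (j.insertNth k y) * B y x := by
          refine Finset.sum_congr rfl fun x _ => Finset.sum_congr rfl fun y _ => ?_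
          rw [Finset.sum_mul]
      _ = ∑ x : Fin p → Fin d, ∑ k : Fin d, ∑ y : Fin q → Fin d,
            u (i.insertNth k x) (j.insertNth k y) * B y x := by
          refine Finset.sum_congr rfl fun x _ => ?_
          rw [Finset.sum_comm]
      _ = ∑ k : Fin d, ∑ x : Fin p → Fin d, ∑ y : Fin q → Fin d,
            u (i.insertNth k x) (j.insertNth k y) * B y x := by
          rw [Finset.sum_comm]
  rw [hL, hR]

end InsT
section DTens
open Equiv

lemma mtens_append {p₁ q₁ p₂ q₂ : ℕ} (A : MixT K d p₁ q₁) (B : MixT K d p₂ q₂)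
    (r : Fin p₁ → Fin d) (X : Fin p₂ → Fin d) (s : Fin q₁ → Fin d) (Y : Fin q₂ → Fin d) :
    mtens A B (Fin.append r X) (Fin.append s Y) = A r s * B X Y := by
  rw [mtens]
  congr 1
  · congr 1
    · funext a; exact Fin.append_left r X a
    · funext b; exact Fin.append_left s Y b
  · congr 1
    · funext a; exact Fin.append_right r X a
    · funext b; exact Fin.append_right s Y b

/-- contraction of `A` against the first blocks of `C` -/
def Dleft {p₁ q₁ p₂ q₂ : ℕ} (A : MixT K d p₁ q₁) (C : MixT K d (q₁+q₂) (p₁+p₂)) :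
    MixT K d q₂ p₂ :=
  fun Y X => ∑ r : Fin p₁ → Fin d, ∑ s : Fin q₁ → Fin d,
    A r s * C (Fin.append s Y) (Fin.append r X)

def gL1 (p₁ q₁ q₂ : ℕ) : (Fin p₁ ⊕ (Fin q₁ ⊕ Fin q₂)) ≃ (Fin q₂ ⊕ (Fin p₁ ⊕ Fin q₁)) :=
  (Equiv.sumAssoc _ _ _).symm.trans (Equiv.sumComm _ _)

def gL2 (q₁ p₁ p₂ : ℕ) : (Fin q₁ ⊕ (Fin p₁ ⊕ Fin p₂)) ≃ (Fin p₂ ⊕ (Fin p₁ ⊕ Fin q₁)) :=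
  (Equiv.sumComm _ _).trans ((Equiv.sumCongr (Equiv.sumComm _ _) (Equiv.refl _)).trans
    (Equiv.sumAssoc _ _ _))

lemma Dleft_eq_pc {p₁ q₁ p₂ q₂ : ℕ} (A : MixT K d p₁ q₁) (C : MixT K d (q₁+q₂) (p₁+p₂)) :
    Dleft A C = pc (p₁+q₁) (fun x y => (mtens A C)
      (fun a => x (shuf (gL1 p₁ q₁ q₂) a)) (fun b => y (shuf (gL2 q₁ p₁ p₂) b))) := by
  funext Y X
  rw [pc, sum_append]
  refine Finset.sum_congr rfl fun r _ => Finset.sum_congr rfl fun s _ => ?_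
  have harg1 : (fun a => Fin.append Y (Fin.append r s)
      (shuf (gL1 p₁ q₁ q₂) (Fin.castAdd (q₁+q₂) a))) = r := by
    funext a
    rw [← fin3_inl, shuf_apply]
    rw [show gL1 p₁ q₁ q₂ (Sum.inl a) = Sum.inr (Sum.inl a) from rfl]
    rw [app3_inr_inl]
  have harg2 : (fun b => Fin.append Y (Fin.append r s)
      (shuf (gL1 p₁ q₁ q₂) (Fin.natAdd p₁ b))) = Fin.append s Y := by
    funext b
    refine Fin.addCases (fun b' => ?_) (fun c => ?_) b
    · rw [← fin3_inr_inl, shuf_apply]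
      rw [show gL1 p₁ q₁ q₂ (Sum.inr (Sum.inl b')) = Sum.inr (Sum.inr b') from rfl]
      rw [app3_inr_inr, Fin.append_left]
    · rw [← fin3_inr_inr, shuf_apply]
      rw [show gL1 p₁ q₁ q₂ (Sum.inr (Sum.inr c)) = Sum.inl c from rfl]
      rw [app3_inl, Fin.append_right]
  have harg3 : (fun b => Fin.append X (Fin.append r s)
      (shuf (gL2 q₁ p₁ p₂) (Fin.castAdd (p₁+p₂) b))) = s := by
    funext b
    rw [← fin3_inl, shuf_apply]
    rw [show gL2 q₁ p₁ p₂ (Sum.inl b) = Sum.inr (Sum.inr b) from rfl]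
    rw [app3_inr_inr]
  have harg4 : (fun a => Fin.append X (Fin.append r s)
      (shuf (gL2 q₁ p₁ p₂) (Fin.natAdd q₁ a))) = Fin.append r X := by
    funext a
    refine Fin.addCases (fun r' => ?_) (fun X' => ?_) a
    · rw [← fin3_inr_inl, shuf_apply]
      rw [show gL2 q₁ p₁ p₂ (Sum.inr (Sum.inl r')) = Sum.inr (Sum.inl r') from rfl]
      rw [app3_inr_inl, Fin.append_left]
    · rw [← fin3_inr_inr, shuf_apply]
      rw [show gL2 q₁ p₁ p₂ (Sum.inr (Sum.inr X')) = Sum.inl X' from rfl]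
      rw [app3_inl, Fin.append_right]
  show A r s * C (Fin.append s Y) (Fin.append r X) = mtens A C _ _
  rw [mtens]
  rw [harg1, harg2, harg3, harg4]

lemma Dleft_mem (S : ∀ p q : ℕ, Set (MixT K d p q))
    (hT : ∀ (p q : ℕ) (A : MixT K d p q), A ∈ S p q → mtens A (mid K d) ∈ S (p+1) (q+1))
    (hC : ∀ (p q : ℕ) (i : Fin (p+1)) (j : Fin (q+1)) (A : MixT K d (p+1) (q+1)),
      A ∈ S (p+1) (q+1) → mcontr i j A ∈ S p q)
    {p₁ q₁ p₂ q₂ : ℕ} {A : MixT K d p₁ q₁} {C : MixT K d (q₁+q₂) (p₁+p₂)}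
    (hAC : mtens A C ∈ S (p₁+(q₁+q₂)) (q₁+(p₁+p₂))) :
    Dleft A C ∈ S q₂ p₂ := by
  rw [Dleft_eq_pc]
  exact pc_mem S hC (p₁+q₁) _
    (reindexE_mem S hT hC (shuf (gL1 p₁ q₁ q₂)) (shuf (gL2 q₁ p₁ p₂)) hAC)

def Dright {p₁ q₁ p₂ q₂ : ℕ} (A : MixT K d p₁ q₁) (C : MixT K d (q₂+q₁) (p₂+p₁)) :
    MixT K d q₂ p₂ :=
  fun Y X => ∑ r : Fin p₁ → Fin d, ∑ s : Fin q₁ → Fin d,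
    A r s * C (Fin.append Y s) (Fin.append X r)

def gR1 (p₁ q₂ q₁ : ℕ) : (Fin p₁ ⊕ (Fin q₂ ⊕ Fin q₁)) ≃ (Fin q₂ ⊕ (Fin p₁ ⊕ Fin q₁)) :=
  (Equiv.sumAssoc _ _ _).symm.trans ((Equiv.sumCongr (Equiv.sumComm _ _) (Equiv.refl _)).trans
    (Equiv.sumAssoc _ _ _))

def gR2 (q₁ p₂ p₁ : ℕ) : (Fin q₁ ⊕ (Fin p₂ ⊕ Fin p₁)) ≃ (Fin p₂ ⊕ (Fin p₁ ⊕ Fin q₁)) :=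
  (Equiv.sumComm _ _).trans (Equiv.sumAssoc _ _ _)

lemma Dright_eq_pc {p₁ q₁ p₂ q₂ : ℕ} (A : MixT K d p₁ q₁) (C : MixT K d (q₂+q₁) (p₂+p₁)) :
    Dright A C = pc (p₁+q₁) (fun x y => (mtens A C)
      (fun a => x (shuf (gR1 p₁ q₂ q₁) a)) (fun b => y (shuf (gR2 q₁ p₂ p₁) b))) := by
  funext Y X
  rw [pc, sum_append]
  refine Finset.sum_congr rfl fun r _ => Finset.sum_congr rfl fun s _ => ?_
  have harg1 : (fun a => Fin.append Y (Fin.append r s)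
      (shuf (gR1 p₁ q₂ q₁) (Fin.castAdd (q₂+q₁) a))) = r := by
    funext a
    rw [← fin3_inl, shuf_apply]
    rw [show gR1 p₁ q₂ q₁ (Sum.inl a) = Sum.inr (Sum.inl a) from rfl]
    rw [app3_inr_inl]
  have harg2 : (fun b => Fin.append Y (Fin.append r s)
      (shuf (gR1 p₁ q₂ q₁) (Fin.natAdd p₁ b))) = Fin.append Y s := by
    funext b
    refine Fin.addCases (fun Y' => ?_) (fun s' => ?_) b
    · rw [← fin3_inr_inl, shuf_apply]
      rw [show gR1 p₁ q₂ q₁ (Sum.inr (Sum.inl Y')) = Sum.inl Y' from rfl]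
      rw [app3_inl, Fin.append_left]
    · rw [← fin3_inr_inr, shuf_apply]
      rw [show gR1 p₁ q₂ q₁ (Sum.inr (Sum.inr s')) = Sum.inr (Sum.inr s') from rfl]
      rw [app3_inr_inr, Fin.append_right]
  have harg3 : (fun b => Fin.append X (Fin.append r s)
      (shuf (gR2 q₁ p₂ p₁) (Fin.castAdd (p₂+p₁) b))) = s := by
    funext b
    rw [← fin3_inl, shuf_apply]
    rw [show gR2 q₁ p₂ p₁ (Sum.inl b) = Sum.inr (Sum.inr b) from rfl]
    rw [app3_inr_inr]
  have harg4 : (fun a => Fin.append X (Fin.append r s)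
      (shuf (gR2 q₁ p₂ p₁) (Fin.natAdd q₁ a))) = Fin.append X r := by
    funext a
    refine Fin.addCases (fun X' => ?_) (fun r' => ?_) a
    · rw [← fin3_inr_inl, shuf_apply]
      rw [show gR2 q₁ p₂ p₁ (Sum.inr (Sum.inl X')) = Sum.inl X' from rfl]
      rw [app3_inl, Fin.append_left]
    · rw [← fin3_inr_inr, shuf_apply]
      rw [show gR2 q₁ p₂ p₁ (Sum.inr (Sum.inr r')) = Sum.inr (Sum.inl r') from rfl]
      rw [app3_inr_inl, Fin.append_right]
  show A r s * C (Fin.append Y s) (Fin.append X r) = mtens A C _ _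
  rw [mtens]
  rw [harg1, harg2, harg3, harg4]

lemma Dright_mem (S : ∀ p q : ℕ, Set (MixT K d p q))
    (hT : ∀ (p q : ℕ) (A : MixT K d p q), A ∈ S p q → mtens A (mid K d) ∈ S (p+1) (q+1))
    (hC : ∀ (p q : ℕ) (i : Fin (p+1)) (j : Fin (q+1)) (A : MixT K d (p+1) (q+1)),
      A ∈ S (p+1) (q+1) → mcontr i j A ∈ S p q)
    {p₁ q₁ p₂ q₂ : ℕ} {A : MixT K d p₁ q₁} {C : MixT K d (q₂+q₁) (p₂+p₁)}
    (hAC : mtens A C ∈ S (p₁+(q₂+q₁)) (q₁+(p₂+p₁))) :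
    Dright A C ∈ S q₂ p₂ := by
  rw [Dright_eq_pc]
  exact pc_mem S hC (p₁+q₁) _
    (reindexE_mem S hT hC (shuf (gR1 p₁ q₂ q₁)) (shuf (gR2 q₁ p₂ p₁)) hAC)

lemma sum4_comm {M : Type*} [AddCommMonoid M] {α β γ δ : Type*}
    [Fintype α] [Fintype β] [Fintype γ] [Fintype δ] (f : α → β → γ → δ → M) :
    (∑ a : α, ∑ b : β, ∑ c : γ, ∑ e : δ, f a b c e)
      = ∑ b : β, ∑ e : δ, ∑ a : α, ∑ c : γ, f a b c e := by
  calc (∑ a : α, ∑ b : β, ∑ c : γ, ∑ e : δ, f a b c e)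
      = ∑ b : β, ∑ a : α, ∑ c : γ, ∑ e : δ, f a b c e := Finset.sum_comm
    _ = ∑ b : β, ∑ a : α, ∑ e : δ, ∑ c : γ, f a b c e := by
        exact Finset.sum_congr rfl fun b _ => Finset.sum_congr rfl fun a _ => Finset.sum_comm
    _ = ∑ b : β, ∑ e : δ, ∑ a : α, ∑ c : γ, f a b c e := by
        exact Finset.sum_congr rfl fun b _ => Finset.sum_comm

lemma mpair_mtens_left {p₁ q₁ p₂ q₂ : ℕ} (A : MixT K d p₁ q₁) (u : MixT K d p₂ q₂)
    (C : MixT K d (q₁+q₂) (p₁+p₂)) :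
    mpair (mtens A u) C = mpair u (Dleft A C) := by
  rw [mpair, mpair]
  rw [sum_append (fun x => ∑ y : Fin (q₁+q₂) → Fin d, mtens A u x y * C y x)]
  calc (∑ r : Fin p₁ → Fin d, ∑ X : Fin p₂ → Fin d, ∑ y : Fin (q₁+q₂) → Fin d,
          mtens A u (Fin.append r X) y * C y (Fin.append r X))
      = ∑ r : Fin p₁ → Fin d, ∑ X : Fin p₂ → Fin d, ∑ s : Fin q₁ → Fin d,
          ∑ Y : Fin q₂ → Fin d, (A r s * u X Y) * C (Fin.append s Y) (Fin.append r X) := by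
        refine Finset.sum_congr rfl fun r _ => Finset.sum_congr rfl fun X _ => ?_
        rw [sum_append (fun y => mtens A u (Fin.append r X) y * C y (Fin.append r X))]
        refine Finset.sum_congr rfl fun s _ => Finset.sum_congr rfl fun Y _ => ?_
        rw [mtens_append]
    _ = ∑ X : Fin p₂ → Fin d, ∑ Y : Fin q₂ → Fin d, ∑ r : Fin p₁ → Fin d,
          ∑ s : Fin q₁ → Fin d, (A r s * u X Y) * C (Fin.append s Y) (Fin.append r X) :=
        sum4_comm _
    _ = ∑ X : Fin p₂ → Fin d, ∑ Y : Fin q₂ → Fin d, u X Y * Dleft A C Y X := by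
        refine Finset.sum_congr rfl fun X _ => Finset.sum_congr rfl fun Y _ => ?_
        rw [Dleft, Finset.mul_sum]
        refine Finset.sum_congr rfl fun r _ => ?_
        rw [Finset.mul_sum]
        refine Finset.sum_congr rfl fun s _ => ?_
        ring

lemma mpair_mtens_right {p₁ q₁ p₂ q₂ : ℕ} (A : MixT K d p₁ q₁) (u : MixT K d p₂ q₂)
    (C : MixT K d (q₂+q₁) (p₂+p₁)) :
    mpair (mtens u A) C = mpair u (Dright A C) := by
  rw [mpair, mpair]
  rw [sum_append (fun x => ∑ y : Fin (q₂+q₁) → Fin d, mtens u A x y * C y x)]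
  calc (∑ X : Fin p₂ → Fin d, ∑ r : Fin p₁ → Fin d, ∑ y : Fin (q₂+q₁) → Fin d,
          mtens u A (Fin.append X r) y * C y (Fin.append X r))
      = ∑ X : Fin p₂ → Fin d, ∑ r : Fin p₁ → Fin d, ∑ Y : Fin q₂ → Fin d,
          ∑ s : Fin q₁ → Fin d, (u X Y * A r s) * C (Fin.append Y s) (Fin.append X r) := by
        refine Finset.sum_congr rfl fun X _ => Finset.sum_congr rfl fun r _ => ?_
        rw [sum_append (fun y => mtens u A (Fin.append X r) y * C y (Fin.append X r))]
        refine Finset.sum_congr rfl fun Y _ => Finset.sum_congr rfl fun s _ => ?_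
        rw [mtens_append]
    _ = ∑ X : Fin p₂ → Fin d, ∑ Y : Fin q₂ → Fin d, ∑ r : Fin p₁ → Fin d,
          ∑ s : Fin q₁ → Fin d, (u X Y * A r s) * C (Fin.append Y s) (Fin.append X r) := by
        refine Finset.sum_congr rfl fun X _ => ?_
        exact Finset.sum_comm
    _ = ∑ X : Fin p₂ → Fin d, ∑ Y : Fin q₂ → Fin d, u X Y * Dright A C Y X := by
        refine Finset.sum_congr rfl fun X _ => Finset.sum_congr rfl fun Y _ => ?_
        rw [Dright, Finset.mul_sum]
        refine Finset.sum_congr rfl fun r _ => ?_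
        rw [Finset.mul_sum]
        refine Finset.sum_congr rfl fun s _ => ?_
        ring

end DTens
section Pair
open Equiv

def swEq (q p : ℕ) : Fin (q+p) ≃ Fin (p+q) :=
  finSumFinEquiv.symm.trans ((Equiv.sumComm (Fin q) (Fin p)).trans finSumFinEquiv)

lemma swEq_castAdd {q p : ℕ} (c : Fin q) : swEq q p (Fin.castAdd p c) = Fin.natAdd p c := by
  simp [swEq]

lemma swEq_natAdd {q p : ℕ} (a : Fin p) : swEq q p (Fin.natAdd q a) = Fin.castAdd q a := by
  simp [swEq]

lemma pair_mem (S : ∀ p q : ℕ, Set (MixT K d p q))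
    (hT : ∀ (p q : ℕ) (A : MixT K d p q), A ∈ S p q → mtens A (mid K d) ∈ S (p+1) (q+1))
    (hC : ∀ (p q : ℕ) (i : Fin (p+1)) (j : Fin (q+1)) (A : MixT K d (p+1) (q+1)),
      A ∈ S (p+1) (q+1) → mcontr i j A ∈ S p q)
    {p q : ℕ} (u : MixT K d p q) (v : MixT K d q p)
    (h : mtens u v ∈ S (p+q) (q+p)) :
    (fun _ _ => mpair u v : MixT K d 0 0) ∈ S 0 0 := by
  have hW : (fun x y => (mtens u v) (fun a => x (Equiv.refl (Fin (p+q)) a))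
      (fun b => y (swEq q p b))) ∈ S (p+q) (p+q) :=
    reindexE_mem S hT hC (Equiv.refl (Fin (p+q))) (swEq q p) h
  have hW2 := mcast_mem S (zero_add (p+q)).symm (zero_add (p+q)).symm hW
  have hW3 := pc_mem S hC (p+q) _ hW2
  have he : pc (p+q) (mcast (zero_add (p+q)).symm (zero_add (p+q)).symm
      (fun x y => (mtens u v) (fun a => x (Equiv.refl (Fin (p+q)) a))
        (fun b => y (swEq q p b)))) = (fun _ _ => mpair u v : MixT K d 0 0) := by
    funext X Y
    rw [pc]
    have hcast : ∀ (t : Fin (p+q) → Fin d) (Z : Fin 0 → Fin d),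
        (fun a => Fin.append Z t (Fin.cast (zero_add (p+q)).symm a)) = t := by
      intro t Z
      funext a
      have h1 : Fin.cast (zero_add (p+q)).symm a = Fin.natAdd 0 a := by
        ext; simp
      rw [h1, Fin.append_right]
    calc (∑ t : Fin (p+q) → Fin d, mcast (zero_add (p+q)).symm (zero_add (p+q)).symm
            (fun x y => (mtens u v) (fun a => x (Equiv.refl (Fin (p+q)) a))
              (fun b => y (swEq q p b))) (Fin.append X t) (Fin.append Y t))
        = ∑ t : Fin (p+q) → Fin d, (mtens u v) t (fun b => t (swEq q p b)) := by
          refine Finset.sum_congr rfl fun t _ => ?_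
          rw [mcast]
          rw [hcast t X, hcast t Y]
          rfl
      _ = ∑ a : Fin p → Fin d, ∑ b : Fin q → Fin d,
            (mtens u v) (Fin.append a b) (Fin.append b a) := by
          rw [sum_append (fun t => (mtens u v) t (fun b => t (swEq q p b)))]
          refine Finset.sum_congr rfl fun a _ => Finset.sum_congr rfl fun b _ => ?_
          congr 1
          funext c
          refine Fin.addCases (fun c' => ?_) (fun a' => ?_) c
          · rw [swEq_castAdd, Fin.append_right, Fin.append_left]
          · rw [swEq_natAdd, Fin.append_left, Fin.append_right]
      _ = mpair u v := by
          rw [mpair]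
          refine Finset.sum_congr rfl fun a _ => Finset.sum_congr rfl fun b _ => ?_
          exact mtens_append u v a b b a
  rw [he] at hW3
  exact hW3

end Pair
end Stmt13Aux

/-- A sub-wheeled PROP of the mixed tensor algebra `𝒱`: a family of `K`-subspaces
`𝒜^p_q ⊆ 𝒱^p_q` containing `1` and `id`, closed under tensor product and under
all contractions. -/
structure SubProp (K : Type) [Field K] (d : ℕ) where
  mem : ∀ p q : ℕ, Set (MixT K d p q)
  unit_mem : munit K d ∈ mem 0 0
  id_mem : mid K d ∈ mem 1 1
  zero_mem : ∀ p q : ℕ, (0 : MixT K d p q) ∈ mem p q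
  add_mem : ∀ (p q : ℕ) (A B : MixT K d p q),
    A ∈ mem p q → B ∈ mem p q → A + B ∈ mem p q
  smul_mem : ∀ (p q : ℕ) (c : K) (A : MixT K d p q), A ∈ mem p q → c • A ∈ mem p q
  tens_mem : ∀ (p₁ q₁ p₂ q₂ : ℕ) (A : MixT K d p₁ q₁) (B : MixT K d p₂ q₂),
    A ∈ mem p₁ q₁ → B ∈ mem p₂ q₂ → mtens A B ∈ mem (p₁ + p₂) (q₁ + q₂)
  contr_mem : ∀ (p q : ℕ) (i : Fin (p + 1)) (j : Fin (q + 1)) (A : MixT K d (p + 1) (q + 1)),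
    A ∈ mem (p + 1) (q + 1) → mcontr i j A ∈ mem p q

/-- An ideal of a sub-wheeled PROP `𝒜` of `𝒱`: a family of `K`-subspaces
`I^p_q ⊆ 𝒜^p_q` absorbing under tensor product with elements of `𝒜` (on either
side) and closed under all contractions. -/
structure PropIdeal {K : Type} [Field K] {d : ℕ} (𝒜 : SubProp K d) where
  mem : ∀ p q : ℕ, Set (MixT K d p q)
  subset : ∀ p q : ℕ, mem p q ⊆ 𝒜.mem p q
  zero_mem : ∀ p q : ℕ, (0 : MixT K d p q) ∈ mem p q
  add_mem : ∀ (p q : ℕ) (A B : MixT K d p q),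
    A ∈ mem p q → B ∈ mem p q → A + B ∈ mem p q
  smul_mem : ∀ (p q : ℕ) (c : K) (A : MixT K d p q), A ∈ mem p q → c • A ∈ mem p q
  tens_mem_left : ∀ (p₁ q₁ p₂ q₂ : ℕ) (A : MixT K d p₁ q₁) (B : MixT K d p₂ q₂),
    A ∈ 𝒜.mem p₁ q₁ → B ∈ mem p₂ q₂ → mtens A B ∈ mem (p₁ + p₂) (q₁ + q₂)
  tens_mem_right : ∀ (p₁ q₁ p₂ q₂ : ℕ) (A : MixT K d p₁ q₁) (B : MixT K d p₂ q₂),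
    A ∈ 𝒜.mem p₁ q₁ → B ∈ mem p₂ q₂ → mtens B A ∈ mem (p₂ + p₁) (q₂ + q₁)
  contr_mem : ∀ (p q : ℕ) (i : Fin (p + 1)) (j : Fin (q + 1)) (A : MixT K d (p + 1) (q + 1)),
    A ∈ mem (p + 1) (q + 1) → mcontr i j A ∈ mem p q

/-- A sub-wheeled PROP is simple if its only ideals are `0` and itself. -/
def SubProp.IsSimple {K : Type} [Field K] {d : ℕ} (𝒜 : SubProp K d) : Prop :=
  ∀ I : PropIdeal 𝒜,
    (∀ p q : ℕ, I.mem p q = {0}) ∨ (∀ p q : ℕ, I.mem p q = 𝒜.mem p q)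

theorem stmt13 (K : Type) [Field K] [CharZero K] (d : ℕ) (𝒜 : SubProp K d) :
    𝒜.IsSimple ↔
      ∀ p q : ℕ,
        (∀ u ∈ 𝒜.mem p q, u ≠ 0 → ∃ v ∈ 𝒜.mem q p, mpair u v ≠ 0) ∧
        (∀ v ∈ 𝒜.mem q p, v ≠ 0 → ∃ u ∈ 𝒜.mem p q, mpair u v ≠ 0) := by

  classical
  have hTA : ∀ (p q : ℕ) (A : MixT K d p q), A ∈ 𝒜.mem p q →
      mtens A (mid K d) ∈ 𝒜.mem (p+1) (q+1) :=
    fun p q A hA => 𝒜.tens_mem p q 1 1 A (mid K d) hA 𝒜.id_mem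
  have hCA := 𝒜.contr_mem
  constructor
  · intro hs
    rcases hs
      { mem := fun p q => {u | u ∈ 𝒜.mem p q ∧ ∀ v ∈ 𝒜.mem q p, mpair u v = 0}
        subset := fun p q u hu => hu.1
        zero_mem := fun p q => ⟨𝒜.zero_mem p q, fun v _ => Stmt13Aux.mpair_zero_left v⟩
        add_mem := fun p q A B hA hB => ⟨𝒜.add_mem _ _ _ _ hA.1 hB.1, fun v hv => by
          rw [Stmt13Aux.mpair_add_left, hA.2 v hv, hB.2 v hv, add_zero]⟩
        smul_mem := fun p q c A hA => ⟨𝒜.smul_mem _ _ _ _ hA.1, fun v hv => by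
          rw [Stmt13Aux.mpair_smul_left, hA.2 v hv, mul_zero]⟩
        tens_mem_left := fun p₁ q₁ p₂ q₂ A B hA hB =>
          ⟨𝒜.tens_mem _ _ _ _ _ _ hA hB.1, fun C hCmem => by
            rw [Stmt13Aux.mpair_mtens_left]
            exact hB.2 _ (Stmt13Aux.Dleft_mem 𝒜.mem hTA hCA
              (𝒜.tens_mem _ _ _ _ _ _ hA hCmem))⟩
        tens_mem_right := fun p₁ q₁ p₂ q₂ A B hA hB =>
          ⟨𝒜.tens_mem _ _ _ _ _ _ hB.1 hA, fun C hCmem => by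
            rw [Stmt13Aux.mpair_mtens_right]
            exact hB.2 _ (Stmt13Aux.Dright_mem 𝒜.mem hTA hCA
              (𝒜.tens_mem _ _ _ _ _ _ hA hCmem))⟩
        contr_mem := fun p q i j A hA => ⟨𝒜.contr_mem _ _ _ _ _ hA.1, fun B hB => by
          rw [Stmt13Aux.mpair_contr]
          exact hA.2 _ (Stmt13Aux.insT_mem 𝒜.mem hTA hCA j i hB)⟩ }
      with h0 | hall
    · have key : ∀ p q : ℕ, ∀ u ∈ 𝒜.mem p q, u ≠ 0 → ∃ v ∈ 𝒜.mem q p, mpair u v ≠ 0 := by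
        intro p q u hu hne
        by_contra hcon
        push_neg at hcon
        have hmem : u ∈ ({0} : Set (MixT K d p q)) := by
          rw [← h0 p q]
          exact ⟨hu, hcon⟩
        exact hne (Set.eq_of_mem_singleton hmem)
      intro p q
      refine ⟨key p q, fun v hv hne => ?_⟩
      obtain ⟨w, hw, hpw⟩ := key q p v hv hne
      exact ⟨w, hw, by rwa [Stmt13Aux.mpair_comm]⟩
    · exfalso
      have hmu : munit K d ∈ {u | u ∈ 𝒜.mem 0 0 ∧ ∀ v ∈ 𝒜.mem 0 0, mpair u v = 0} := by
        have h2 : {u | u ∈ 𝒜.mem 0 0 ∧ ∀ v ∈ 𝒜.mem 0 0, mpair u v = 0} = 𝒜.mem 0 0 :=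
          hall 0 0
        rw [h2]
        exact 𝒜.unit_mem
      have h1 := hmu.2 (munit K d) 𝒜.unit_mem
      rw [Stmt13Aux.mpair_munit] at h1
      exact one_ne_zero h1
  · intro hnd I
    by_cases hI : ∀ p q, I.mem p q = {0}
    · left; exact hI
    · right
      push_neg at hI
      obtain ⟨p, q, hpq⟩ := hI
      have hex : ∃ u ∈ I.mem p q, u ≠ 0 := by
        by_contra hcon
        push_neg at hcon
        exact hpq (Set.eq_singleton_iff_unique_mem.mpr ⟨I.zero_mem p q, fun u hu => hcon u hu⟩)
      obtain ⟨u, hu, hune⟩ := hex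
      obtain ⟨v, hv, hpv⟩ := (hnd p q).1 u (I.subset p q hu) hune
      have hTI : ∀ (p' q' : ℕ) (A : MixT K d p' q'), A ∈ I.mem p' q' →
          mtens A (mid K d) ∈ I.mem (p'+1) (q'+1) :=
        fun p' q' A hA => I.tens_mem_right 1 1 p' q' (mid K d) A 𝒜.id_mem hA
      have huv : mtens u v ∈ I.mem (p+q) (q+p) := I.tens_mem_right q p p q v u hv hu
      have hs := Stmt13Aux.pair_mem I.mem hTI I.contr_mem u v huv
      have hmunit : munit K d ∈ I.mem 0 0 := by
        have h2 := I.smul_mem 0 0 (mpair u v)⁻¹ _ hs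
        have h3 : (mpair u v)⁻¹ • (fun _ _ => mpair u v : MixT K d 0 0) = munit K d := by
          funext x y
          show (mpair u v)⁻¹ * mpair u v = 1
          exact inv_mul_cancel₀ hpv
        rwa [h3] at h2
      intro p' q'
      refine Set.Subset.antisymm (I.subset p' q') ?_
      intro A hA
      have h4 := I.tens_mem_left p' q' 0 0 A (munit K d) hA hmunit
      have h5 : mtens A (munit K d) = A := by
        funext x y
        exact mul_one _
      rwa [h5] at h4
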